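/- Let H and H̃ be separable complex Hilbert spaces, A ∈ B(H) and B ∈ B(H̃), and assume σ(B) = σ_p(B) = ℂ \ ρ_sF(A). Then for the direct sum operator A ⊕ B on H ⊕ H̃: (i) ρ_sF(A ⊕ B) = ρ_sF(A); (ii) ind(A ⊕ B − λ) = ind(A − λ) for all λ ∈ ρ_sF(A ⊕ B); (iii) min ind((A ⊕ B − λ)^k) = min ind((A − λ)^k) for all λ ∈ ρ_sF(A ⊕ B) and all integers k ≥ 1. -/

import Mathlib

set_option maxHeartbeats 1000000
set_option synthInstance.maxHeartbeats 400000


noncomputable section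

/-- The point spectrum of a bounded operator: the set of `l : ℂ` such that
`T - l • id` has nontrivial kernel. -/
def pointSpectrum {E : Type*} [NormedAddCommGroup E] [InnerProductSpace ℂ E]
    (T : E →L[ℂ] E) : Set ℂ :=
  {l : ℂ | LinearMap.ker ((T - l • (1 : E →L[ℂ] E) : E →L[ℂ] E) : E →ₗ[ℂ] E) ≠ ⊥}

/-- An operator is semi-Fredholm if it has closed range and its kernel or the kernel
of its adjoint is finite dimensional. -/
def IsSemiFredholm {E : Type*} [NormedAddCommGroup E] [InnerProductSpace ℂ E]
    [CompleteSpace E] (T : E →L[ℂ] E) : Prop :=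
  IsClosed (Set.range T) ∧
    (FiniteDimensional ℂ (LinearMap.ker (T : E →ₗ[ℂ] E)) ∨
      FiniteDimensional ℂ (LinearMap.ker (ContinuousLinearMap.adjoint T : E →ₗ[ℂ] E)))

/-- `ρ_sF(T)`: the set of `l : ℂ` such that `T - l • id` is semi-Fredholm. -/
def rhoSF {E : Type*} [NormedAddCommGroup E] [InnerProductSpace ℂ E]
    [CompleteSpace E] (T : E →L[ℂ] E) : Set ℂ :=
  {l : ℂ | IsSemiFredholm (T - l • (1 : E →L[ℂ] E))}

open Classical in
/-- The Fredholm index of a (semi-Fredholm) operator, with values in `ℤ ∪ {-∞, +∞}`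
(encoded as `WithBot (WithTop ℤ)`): `ind T = dim ker T - dim ker T*`; it is `+∞` if
`ker T` is infinite dimensional and `-∞` if `ker T` is finite dimensional but `ker T*`
is not. -/
def opIndex {E : Type*} [NormedAddCommGroup E] [InnerProductSpace ℂ E] [CompleteSpace E]
    (T : E →L[ℂ] E) : WithBot (WithTop ℤ) :=
  if FiniteDimensional ℂ (LinearMap.ker (T : E →ₗ[ℂ] E)) then
    if FiniteDimensional ℂ (LinearMap.ker (ContinuousLinearMap.adjoint T : E →ₗ[ℂ] E)) then
      ((((Module.finrank ℂ (LinearMap.ker (T : E →ₗ[ℂ] E)) : ℤ) -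
          (Module.finrank ℂ (LinearMap.ker (ContinuousLinearMap.adjoint T : E →ₗ[ℂ] E)) : ℤ) : ℤ) :
        WithTop ℤ) : WithBot (WithTop ℤ))
    else ⊥
  else ⊤

/-- The direct sum `A ⊕ B` of two operators, acting on the Hilbert space direct sum
`H ⊕ H̃`, realized as `WithLp 2 (E × F)`. -/
noncomputable def dsum {E F : Type*} [NormedAddCommGroup E] [InnerProductSpace ℂ E]
    [NormedAddCommGroup F] [InnerProductSpace ℂ F]
    (A : E →L[ℂ] E) (B : F →L[ℂ] F) : WithLp 2 (E × F) →L[ℂ] WithLp 2 (E × F) :=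
  ((WithLp.prodContinuousLinearEquiv 2 ℂ E F).symm : (E × F) →L[ℂ] WithLp 2 (E × F)) ∘L
    (A.prodMap B) ∘L
    ((WithLp.prodContinuousLinearEquiv 2 ℂ E F) : WithLp 2 (E × F) →L[ℂ] (E × F))

universe u

section DsumAuxSec

set_option linter.unusedSectionVars false

open ContinuousLinearMap

variable {E F : Type*} [NormedAddCommGroup E] [InnerProductSpace ℂ E] [CompleteSpace E]
  [NormedAddCommGroup F] [InnerProductSpace ℂ F] [CompleteSpace F]

lemma dsum_sub_smul' (A : E →L[ℂ] E) (B : F →L[ℂ] F) (l : ℂ) :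
    dsum A B - l • (1 : WithLp 2 (E × F) →L[ℂ] WithLp 2 (E × F)) =
      dsum (A - l • 1) (B - l • 1) := by
  ext x <;> rfl

lemma dsum_pow' (T : E →L[ℂ] E) (S : F →L[ℂ] F) (k : ℕ) :
    (dsum T S) ^ k = dsum (T ^ k) (S ^ k) := by
  induction k with
  | zero => ext x <;> rfl
  | succ n ih =>
      rw [pow_succ, pow_succ, pow_succ, ih]
      ext x <;> rfl

lemma adjoint_dsum' (T : E →L[ℂ] E) (S : F →L[ℂ] F) :
    ContinuousLinearMap.adjoint (dsum T S) = dsum (adjoint T) (adjoint S) := by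
  symm
  rw [eq_adjoint_iff]
  intro x y
  show (inner ℂ ((dsum (adjoint T) (adjoint S)) x).fst y.fst
      + inner ℂ ((dsum (adjoint T) (adjoint S)) x).snd y.snd : ℂ)
    = inner ℂ x.fst (dsum T S y).fst + inner ℂ x.snd (dsum T S y).snd
  show (inner ℂ ((adjoint T) x.fst) y.fst + inner ℂ ((adjoint S) x.snd) y.snd : ℂ)
    = inner ℂ x.fst (T y.fst) + inner ℂ x.snd (S y.snd)
  rw [adjoint_inner_left, adjoint_inner_left]

/-- kernel of a direct sum is equivalent to the product of the kernels -/
def kerDsumEquiv' (T : E →L[ℂ] E) (S : F →L[ℂ] F) :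
    LinearMap.ker (dsum T S : WithLp 2 (E × F) →ₗ[ℂ] WithLp 2 (E × F)) ≃ₗ[ℂ]
      LinearMap.ker (T : E →ₗ[ℂ] E) × LinearMap.ker (S : F →ₗ[ℂ] F) where
  toFun x := (⟨(x : WithLp 2 (E × F)).fst, by
      have h := x.2
      rw [LinearMap.mem_ker] at h ⊢
      exact congrArg WithLp.fst h⟩,
    ⟨(x : WithLp 2 (E × F)).snd, by
      have h := x.2
      rw [LinearMap.mem_ker] at h ⊢
      exact congrArg WithLp.snd h⟩)
  invFun y := ⟨WithLp.toLp 2 ((y.1 : E), (y.2 : F)), by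
      rw [LinearMap.mem_ker]
      have h1 : T (y.1 : E) = 0 := y.1.2
      have h2 : S (y.2 : F) = 0 := y.2.2
      exact WithLp.ofLp_injective 2 (Prod.ext h1 h2)⟩
  map_add' x y := rfl
  map_smul' c x := rfl
  left_inv x := rfl
  right_inv y := rfl

/-- if the second summand has trivial kernel, the kernel of the direct sum is
equivalent to the kernel of the first summand. -/
def kerDsumEquivOfKerBot (T : E →L[ℂ] E) (S : F →L[ℂ] F)
    (hS : LinearMap.ker (S : F →ₗ[ℂ] F) = ⊥) :
    LinearMap.ker (dsum T S : WithLp 2 (E × F) →ₗ[ℂ] WithLp 2 (E × F)) ≃ₗ[ℂ]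
      LinearMap.ker (T : E →ₗ[ℂ] E) where
  toFun x := ⟨(x : WithLp 2 (E × F)).fst, by
      have h := x.2
      rw [LinearMap.mem_ker] at h ⊢
      exact congrArg WithLp.fst h⟩
  invFun y := ⟨WithLp.toLp 2 ((y : E), (0 : F)), by
      rw [LinearMap.mem_ker]
      have h1 : T (y : E) = 0 := y.2
      exact WithLp.ofLp_injective 2 (Prod.ext h1 (map_zero S))⟩
  map_add' x y := rfl
  map_smul' c x := rfl
  left_inv x := by
    have h := x.2
    rw [LinearMap.mem_ker] at h
    have hsnd : S (x : WithLp 2 (E × F)).snd = 0 := congrArg WithLp.snd h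
    have h0 : (x : WithLp 2 (E × F)).snd = 0 := by
      have : (x : WithLp 2 (E × F)).snd ∈ LinearMap.ker (S : F →ₗ[ℂ] F) := hsnd
      rwa [hS, Submodule.mem_bot] at this
    exact Subtype.ext (WithLp.ofLp_injective 2 (Prod.ext rfl h0.symm))
  right_inv y := rfl

lemma isClosed_range_dsum_iff' (T : E →L[ℂ] E) (S : F →L[ℂ] F) :
    IsClosed (Set.range (dsum T S)) ↔
      IsClosed (Set.range T) ∧ IsClosed (Set.range S) := by
  have himg : (WithLp.prodContinuousLinearEquiv 2 ℂ E F) '' Set.range (dsum T S)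
      = Set.range T ×ˢ Set.range S := by
    ext z
    constructor
    · rintro ⟨w, ⟨v, rfl⟩, rfl⟩
      exact ⟨⟨v.fst, rfl⟩, ⟨v.snd, rfl⟩⟩
    · rintro ⟨⟨a, ha⟩, ⟨b, hb⟩⟩
      refine ⟨dsum T S ((WithLp.prodContinuousLinearEquiv 2 ℂ E F).symm (a, b)),
        ⟨_, rfl⟩, ?_⟩
      exact Prod.ext ha hb
  rw [← (WithLp.prodContinuousLinearEquiv 2 ℂ E F).toHomeomorph.isClosed_image,
    ContinuousLinearEquiv.coe_toHomeomorph, himg]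
  constructor
  · intro h
    constructor
    · have : Set.range T = (fun a : E => (a, (0 : F))) ⁻¹' (Set.range T ×ˢ Set.range S) := by
        ext a
        simp only [Set.mem_preimage, Set.mem_prod]
        exact ⟨fun ha => ⟨ha, 0, map_zero S⟩, fun h => h.1⟩
      rw [this]
      exact h.preimage (continuous_id.prodMk continuous_const)
    · have : Set.range S = (fun b : F => ((0 : E), b)) ⁻¹' (Set.range T ×ˢ Set.range S) := by
        ext b
        simp only [Set.mem_preimage, Set.mem_prod]
        exact ⟨fun hb => ⟨⟨0, map_zero T⟩, hb⟩, fun h => h.2⟩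
      rw [this]
      exact h.preimage (continuous_const.prodMk continuous_id)
  · rintro ⟨h1, h2⟩
    exact h1.prod h2

lemma isUnit_ker_eq_bot' {G : Type*} [NormedAddCommGroup G] [InnerProductSpace ℂ G]
    {S : G →L[ℂ] G} (h : IsUnit S) : LinearMap.ker (S : G →ₗ[ℂ] G) = ⊥ := by
  obtain ⟨u, rfl⟩ := h
  ext x
  simp only [LinearMap.mem_ker, Submodule.mem_bot]
  constructor
  · intro hx
    have h1 : x = (↑u⁻¹ * ↑u : G →L[ℂ] G) x := by rw [u.inv_mul]; rfl
    have h2 : (↑u⁻¹ * ↑u : G →L[ℂ] G) x = (↑u⁻¹ : G →L[ℂ] G) ((↑u : G →L[ℂ] G) x) := rfl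
    rw [h1, h2, (show (↑u : G →L[ℂ] G) x = 0 from hx), map_zero]
  · rintro rfl
    exact map_zero _

lemma isUnit_range_eq' {G : Type*} [NormedAddCommGroup G] [InnerProductSpace ℂ G]
    {S : G →L[ℂ] G} (h : IsUnit S) : Set.range S = Set.univ := by
  obtain ⟨u, rfl⟩ := h
  refine Set.eq_univ_of_forall fun y => ⟨(↑u⁻¹ : G →L[ℂ] G) y, ?_⟩
  show (↑u * ↑u⁻¹ : G →L[ℂ] G) y = y
  rw [u.mul_inv]; rfl

lemma isUnit_sub_smul' {G : Type*} [NormedAddCommGroup G] [InnerProductSpace ℂ G]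
    [CompleteSpace G] {B : G →L[ℂ] G} {l : ℂ} (h : l ∉ spectrum ℂ B) :
    IsUnit (B - l • (1 : G →L[ℂ] G)) := by
  have h' := spectrum.notMem_iff.mp h
  rw [Algebra.algebraMap_eq_smul_one] at h'
  simpa [neg_sub] using h'.neg

end DsumAuxSec

/-- Let `H`, `H̃` be separable complex Hilbert spaces, `A ∈ B(H)`,
`B ∈ B(H̃)` with `σ(B) = σ_p(B) = ℂ \\ ρ_sF(A)`.  Then (i) `ρ_sF(A ⊕ B) = ρ_sF(A)`;
(ii) `ind (A ⊕ B - l) = ind (A - l)` for all `l ∈ ρ_sF(A ⊕ B)`; (iii)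
`min ind ((A ⊕ B - l)^k) = min ind ((A - l)^k)` for all `l ∈ ρ_sF(A ⊕ B)` and `k ≥ 1`,
where `min ind x = min (dim ker x) (dim ker x*)`. -/
theorem dsum_semiFredholm_data
    (E : Type u) [NormedAddCommGroup E] [InnerProductSpace ℂ E] [CompleteSpace E]
    [TopologicalSpace.SeparableSpace E]
    (F : Type u) [NormedAddCommGroup F] [InnerProductSpace ℂ F] [CompleteSpace F]
    [TopologicalSpace.SeparableSpace F]
    (A : E →L[ℂ] E) (B : F →L[ℂ] F)
    (hB1 : spectrum ℂ B = pointSpectrum B) (hB2 : spectrum ℂ B = (rhoSF A)ᶜ) :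
    rhoSF (dsum A B) = rhoSF A ∧
      (∀ l ∈ rhoSF (dsum A B),
        opIndex (dsum A B - l • (1 : WithLp 2 (E × F) →L[ℂ] WithLp 2 (E × F))) =
          opIndex (A - l • (1 : E →L[ℂ] E))) ∧
      ∀ l ∈ rhoSF (dsum A B), ∀ k : ℕ, 1 ≤ k →
        min (Module.rank ℂ (LinearMap.ker
              (((dsum A B - l • (1 : WithLp 2 (E × F) →L[ℂ] WithLp 2 (E × F))) ^ k : WithLp 2 (E × F) →L[ℂ] WithLp 2 (E × F)) : WithLp 2 (E × F) →ₗ[ℂ] WithLp 2 (E × F))))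
            (Module.rank ℂ (LinearMap.ker (ContinuousLinearMap.adjoint
              ((dsum A B - l • (1 : WithLp 2 (E × F) →L[ℂ] WithLp 2 (E × F))) ^ k) : WithLp 2 (E × F) →ₗ[ℂ] WithLp 2 (E × F)))) =
          min (Module.rank ℂ (LinearMap.ker (((A - l • (1 : E →L[ℂ] E)) ^ k : E →L[ℂ] E) : E →ₗ[ℂ] E)))
            (Module.rank ℂ (LinearMap.ker (ContinuousLinearMap.adjoint
              ((A - l • (1 : E →L[ℂ] E)) ^ k) : E →ₗ[ℂ] E))) := by
  classical
  have unitB : ∀ l ∈ rhoSF A, IsUnit (B - l • (1 : F →L[ℂ] F)) := by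
    intro l hl
    apply isUnit_sub_smul'
    rw [hB2]
    simpa using hl
  have hrho : rhoSF (dsum A B) = rhoSF A := by
    ext l
    constructor
    · intro hl
      have hl' : IsSemiFredholm (dsum A B - l • 1) := hl
      rw [dsum_sub_smul'] at hl'
      obtain ⟨hcl, hker⟩ := hl'
      refine ⟨((isClosed_range_dsum_iff' _ _).mp hcl).1, ?_⟩
      rcases hker with h | h
      · left
        haveI := h
        haveI := (kerDsumEquiv' (A - l • 1) (B - l • 1)).finiteDimensional
        exact Module.Finite.of_surjective
          (LinearMap.fst ℂ (LinearMap.ker ((A - l • 1 : E →L[ℂ] E) : E →ₗ[ℂ] E))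
            (LinearMap.ker ((B - l • 1 : F →L[ℂ] F) : F →ₗ[ℂ] F)))
          Prod.fst_surjective
      · right
        rw [adjoint_dsum'] at h
        haveI := h
        haveI := (kerDsumEquiv' (ContinuousLinearMap.adjoint (A - l • 1))
          (ContinuousLinearMap.adjoint (B - l • 1))).finiteDimensional
        exact Module.Finite.of_surjective
          (LinearMap.fst ℂ (LinearMap.ker
              ((ContinuousLinearMap.adjoint (A - l • 1) : E →L[ℂ] E) : E →ₗ[ℂ] E))
            (LinearMap.ker ((ContinuousLinearMap.adjoint (B - l • 1) : F →L[ℂ] F) : F →ₗ[ℂ] F)))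
          Prod.fst_surjective
    · intro hl
      have hu := unitB l hl
      obtain ⟨hcl, hker⟩ := hl
      have hu' : IsUnit (ContinuousLinearMap.adjoint (B - l • (1 : F →L[ℂ] F))) := by
        rw [← ContinuousLinearMap.star_eq_adjoint]
        exact hu.star
      show IsSemiFredholm _
      rw [dsum_sub_smul']
      refine ⟨(isClosed_range_dsum_iff' _ _).mpr
        ⟨hcl, by rw [isUnit_range_eq' hu]; exact isClosed_univ⟩, ?_⟩
      rcases hker with h | h
      · left
        haveI := h
        haveI : FiniteDimensional ℂ (LinearMap.ker ((B - l • (1 : F →L[ℂ] F) : F →L[ℂ] F) : F →ₗ[ℂ] F)) := by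
          rw [isUnit_ker_eq_bot' hu]
          infer_instance
        exact (kerDsumEquiv' (A - l • 1) (B - l • 1)).symm.finiteDimensional
      · right
        rw [adjoint_dsum']
        haveI := h
        haveI : FiniteDimensional ℂ
            (LinearMap.ker ((ContinuousLinearMap.adjoint (B - l • (1 : F →L[ℂ] F)) : F →L[ℂ] F) :
              F →ₗ[ℂ] F)) := by
          rw [isUnit_ker_eq_bot' hu']
          infer_instance
        exact (kerDsumEquiv' (ContinuousLinearMap.adjoint (A - l • 1))
          (ContinuousLinearMap.adjoint (B - l • 1))).symm.finiteDimensional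
  refine ⟨hrho, ?_, ?_⟩
  · intro l hl
    rw [hrho] at hl
    have hu := unitB l hl
    have hu' : IsUnit (ContinuousLinearMap.adjoint (B - l • (1 : F →L[ℂ] F))) := by
      rw [← ContinuousLinearMap.star_eq_adjoint]
      exact hu.star
    rw [dsum_sub_smul']
    have q1 := kerDsumEquivOfKerBot (A - l • 1) (B - l • 1) (isUnit_ker_eq_bot' hu)
    have q2 := kerDsumEquivOfKerBot (ContinuousLinearMap.adjoint (A - l • 1))
      (ContinuousLinearMap.adjoint (B - l • 1)) (isUnit_ker_eq_bot' hu')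
    unfold opIndex
    rw [adjoint_dsum']
    have hfd1 : FiniteDimensional ℂ (LinearMap.ker ((dsum (A - l • 1) (B - l • 1) :
          WithLp 2 (E × F) →L[ℂ] WithLp 2 (E × F)) : WithLp 2 (E × F) →ₗ[ℂ] WithLp 2 (E × F))) ↔
        FiniteDimensional ℂ (LinearMap.ker ((A - l • 1 : E →L[ℂ] E) : E →ₗ[ℂ] E)) :=
      ⟨fun h => by haveI := h; exact q1.finiteDimensional,
       fun h => by haveI := h; exact q1.symm.finiteDimensional⟩
    have hfd2 : FiniteDimensional ℂ (LinearMap.ker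
          ((dsum (ContinuousLinearMap.adjoint (A - l • 1))
            (ContinuousLinearMap.adjoint (B - l • 1)) : WithLp 2 (E × F) →L[ℂ] WithLp 2 (E × F)) :
            WithLp 2 (E × F) →ₗ[ℂ] WithLp 2 (E × F))) ↔
        FiniteDimensional ℂ (LinearMap.ker
          ((ContinuousLinearMap.adjoint (A - l • 1) : E →L[ℂ] E) : E →ₗ[ℂ] E)) :=
      ⟨fun h => by haveI := h; exact q2.finiteDimensional,
       fun h => by haveI := h; exact q2.symm.finiteDimensional⟩
    have hc1 := propext hfd1
    have hc2 := propext hfd2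
    rw [hc1, hc2, q1.finrank_eq, q2.finrank_eq]
  · intro l hl k hk
    rw [hrho] at hl
    have hu := (unitB l hl).pow k
    have hu' : IsUnit (ContinuousLinearMap.adjoint ((B - l • (1 : F →L[ℂ] F)) ^ k)) := by
      rw [← ContinuousLinearMap.star_eq_adjoint]
      exact hu.star
    rw [dsum_sub_smul', dsum_pow', adjoint_dsum']
    rw [(kerDsumEquivOfKerBot ((A - l • 1) ^ k) ((B - l • 1) ^ k)
        (isUnit_ker_eq_bot' hu)).rank_eq,
      (kerDsumEquivOfKerBot (ContinuousLinearMap.adjoint ((A - l • 1) ^ k))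
        (ContinuousLinearMap.adjoint ((B - l • 1) ^ k))
        (isUnit_ker_eq_bot' hu')).rank_eq]

end
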